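/- Assume the GLM loss and the GLM probability model, and suppose c₀ = sup_{t∈ℝ} ψ̈₀(t) < ∞. Let S ⊆ {1,…,p} with S ⊇ {j : β*_j ≠ 0}, let w ∈ ℝ^p be deterministic with w_j > 0 for j ∉ S, let λ₀ > 0, λ₁ > 0, ε₀ > 0, and set t_j = λ₀ for j ∈ S and t_j = w_j λ₁ for j ∉ S. If Σ_{j=1}^p exp( − n² t_j² / (2σ² c₀ |x_j|₂²) ) ≤ ε₀/2, then P( z*₀ ≤ λ₀ and z*₁ ≤ λ₁ ) ≥ 1 − ε₀, where z*₀ = max_{j∈S} |(z − ψ̇(β*))_j| and z*₁ = max_{j∉S} |(z − ψ̇(β*))_j| / w_j. In particular, if |x_j|₂² = n for all j, w_j = 1 for all j ∉ S, 0 < ε₀ < 1, and λ₀ = λ₁ = λ with λ ≥ σ √( (2c₀/n) log(2p/ε₀) ), then P( max_{1≤j≤p} |(z − ψ̇(β*))_j| ≤ λ ) ≥ 1 − ε₀. -/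

import Mathlib

open MeasureTheory ProbabilityTheory

/-!
STATEMENT 8 (Lemma 2(ii)): if c₀ = sup_t ψ̈₀(t) < ∞, then under (lm-2-cond-2),
P(z*₀ ≤ λ₀ and z*₁ ≤ λ₁) ≥ 1 − ε₀; in particular with |x_j|₂² = n, unit weights off S
and λ₀ = λ₁ = λ ≥ σ√((2c₀/n)log(2p/ε₀)), P(max_j |(z − ψ̇(β*))_j| ≤ λ) ≥ 1 − ε₀.
-/

open scoped NNReal ENNReal


lemma aux_taylor {ψ₀ dψ₀ ddψ₀ : ℝ → ℝ}
    (hd1 : ∀ t, HasDerivAt ψ₀ (dψ₀ t) t) (hd2 : ∀ t, HasDerivAt dψ₀ (ddψ₀ t) t)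
    {c₀ : ℝ} (hub : ∀ t, ddψ₀ t ≤ c₀) (θ h : ℝ) :
    ψ₀ (θ + h) ≤ ψ₀ θ + h * dψ₀ θ + c₀ * h ^ 2 / 2 := by
  set D : ℝ → ℝ := fun x => dψ₀ x - dψ₀ θ - c₀ * (x - θ) with hDdef
  set G : ℝ → ℝ := fun x => ψ₀ x - ψ₀ θ - (x - θ) * dψ₀ θ - c₀ * (x - θ) ^ 2 / 2 with hGdef
  have hD : ∀ x, HasDerivAt D (ddψ₀ x - c₀) x := by
    intro x
    have h1 : HasDerivAt (fun x : ℝ => c₀ * (x - θ)) (c₀ * 1) x :=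
      (((hasDerivAt_id x).sub_const θ)).const_mul c₀
    have := ((hd2 x).sub_const (dψ₀ θ)).sub h1
    rw [mul_one] at this
    exact this
  have hG : ∀ x, HasDerivAt G (D x) x := by
    intro x
    have h2 : HasDerivAt (fun x : ℝ => (x - θ) * dψ₀ θ) (1 * dψ₀ θ) x :=
      ((hasDerivAt_id x).sub_const θ).mul_const (dψ₀ θ)
    have h3 : HasDerivAt (fun x : ℝ => c₀ * (x - θ) ^ 2 / 2) (c₀ * (x - θ)) x := by
      have := ((((hasDerivAt_id x).sub_const θ).pow 2).const_mul c₀).div_const 2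
      exact this.congr_deriv (by rw [show (2:ℕ) - 1 = 1 from rfl]; simp only [id]; push_cast; ring)
    have := (((hd1 x).sub_const (ψ₀ θ)).sub h2).sub h3
    exact this.congr_deriv (by show dψ₀ x - 1 * dψ₀ θ - c₀ * (x - θ) = dψ₀ x - dψ₀ θ - c₀ * (x - θ); ring)
  have hDanti : Antitone D :=
    antitone_of_deriv_nonpos (fun x => (hD x).differentiableAt)
      (fun x => by rw [(hD x).deriv]; linarith [hub x])
  have hDθ : D θ = 0 := by simp [hDdef]
  have key : G (θ + h) ≤ 0 := by
    have hGθ : G θ = 0 := by simp [hGdef]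
    rcases le_or_gt 0 h with hh | hh
    · have hAnti : AntitoneOn G (Set.Icc θ (θ + h)) := by
        apply antitoneOn_of_deriv_nonpos (convex_Icc _ _)
        · exact Continuous.continuousOn (by
            exact continuous_iff_continuousAt.2 fun x => (hG x).continuousAt)
        · exact fun x _ => (hG x).differentiableAt.differentiableWithinAt
        · intro x hx
          rw [interior_Icc] at hx
          rw [(hG x).deriv]
          have := hDanti (le_of_lt hx.1)
          rw [hDθ] at this
          exact this
      have := hAnti (Set.left_mem_Icc.2 (by linarith))
        (Set.right_mem_Icc.2 (by linarith)) (by linarith)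
      rw [hGθ] at this
      exact this
    · have hMono : MonotoneOn G (Set.Icc (θ + h) θ) := by
        apply monotoneOn_of_deriv_nonneg (convex_Icc _ _)
        · exact Continuous.continuousOn (by
            exact continuous_iff_continuousAt.2 fun x => (hG x).continuousAt)
        · exact fun x _ => (hG x).differentiableAt.differentiableWithinAt
        · intro x hx
          rw [interior_Icc] at hx
          rw [(hG x).deriv]
          have := hDanti (le_of_lt hx.2)
          rw [hDθ] at this
          linarith
      have := hMono (Set.left_mem_Icc.2 (by linarith))
        (Set.right_mem_Icc.2 (by linarith)) (by linarith)
      rw [hGθ] at this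
      exact this
  have : ψ₀ (θ + h) - ψ₀ θ - h * dψ₀ θ - c₀ * h ^ 2 / 2 ≤ 0 := by
    simpa [hGdef] using key
  linarith



lemma aux_mgf_one {Ω : Type} [MeasurableSpace Ω] (P : Measure Ω) [IsProbabilityMeasure P]
    (ψ₀ : ℝ → ℝ) {σ : ℝ} (hσ : 0 < σ) (cc : ℝ → ℝ) (hcc : Measurable cc)
    (ν : Measure ℝ) [SigmaFinite ν]
    (hnorm : ∀ θ : ℝ, ∫ v, Real.exp ((θ * v - ψ₀ θ) / σ ^ 2 + cc v / σ ^ 2) ∂ν = 1)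
    (θ s : ℝ) (Y : Ω → ℝ) (hY : Measurable Y)
    (hlaw : Measure.map Y P = ν.withDensity (fun v => ENNReal.ofReal (Real.exp
        ((θ * v - ψ₀ θ) / σ ^ 2 + cc v / σ ^ 2)))) :
    Integrable (fun ω => Real.exp (s * Y ω)) P ∧
      ∫ ω, Real.exp (s * Y ω) ∂P = Real.exp ((ψ₀ (θ + s * σ ^ 2) - ψ₀ θ) / σ ^ 2) := by
  have hσ2 : (0:ℝ) < σ ^ 2 := by positivity
  set θ' : ℝ := θ + s * σ ^ 2 with hθ'
  set g : ℝ → ℝ := fun v => Real.exp ((θ * v - ψ₀ θ) / σ ^ 2 + cc v / σ ^ 2) with hgdef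
  set g' : ℝ → ℝ := fun v => Real.exp ((θ' * v - ψ₀ θ') / σ ^ 2 + cc v / σ ^ 2) with hg'def
  have hg_meas : Measurable g := by
    apply Measurable.exp
    exact (((measurable_id.const_mul θ).sub_const (ψ₀ θ)).div_const _).add
      (hcc.div_const _)
  have hg'_meas : Measurable g' := by
    apply Measurable.exp
    exact (((measurable_id.const_mul θ').sub_const (ψ₀ θ')).div_const _).add
      (hcc.div_const _)
  have key : ∀ v, Real.exp (s * v) * g v =
      Real.exp ((ψ₀ θ' - ψ₀ θ) / σ ^ 2) * g' v := by
    intro v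
    rw [hgdef, hg'def, ← Real.exp_add, ← Real.exp_add]
    congr 1
    field_simp
    ring
  have hg'_int : Integrable g' ν := by
    by_contra hni
    have h1 := hnorm θ'
    rw [integral_undef hni] at h1
    norm_num at h1
  have hmul_int : Integrable (fun v => Real.exp (s * v) * g v) ν := by
    have : (fun v => Real.exp (s * v) * g v) =
        fun v => Real.exp ((ψ₀ θ' - ψ₀ θ) / σ ^ 2) * g' v := funext key
    rw [this]
    exact hg'_int.const_mul _
  have hmul_integral : ∫ v, Real.exp (s * v) * g v ∂ν =
      Real.exp ((ψ₀ θ' - ψ₀ θ) / σ ^ 2) := by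
    calc ∫ v, Real.exp (s * v) * g v ∂ν
        = ∫ v, Real.exp ((ψ₀ θ' - ψ₀ θ) / σ ^ 2) * g' v ∂ν := by
          exact integral_congr_ae (Filter.Eventually.of_forall key)
      _ = Real.exp ((ψ₀ θ' - ψ₀ θ) / σ ^ 2) * ∫ v, g' v ∂ν := integral_const_mul _ _
      _ = Real.exp ((ψ₀ θ' - ψ₀ θ) / σ ^ 2) := by rw [hnorm θ']; ring
  -- density measure
  set μ' : Measure ℝ := ν.withDensity (fun v => ENNReal.ofReal (g v)) with hμ'
  have hofReal_meas : Measurable (fun v => ENNReal.ofReal (g v)) :=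
    hg_meas.ennreal_ofReal
  have hwd : ∀ G : ℝ → ℝ, Integrable G μ' ↔
      Integrable (fun v => G v * g v) ν := by
    intro G
    rw [hμ', integrable_withDensity_iff hofReal_meas
      (Filter.Eventually.of_forall fun x => ENNReal.ofReal_lt_top)]
    have : ∀ v, G v * (ENNReal.ofReal (g v)).toReal = G v * g v := by
      intro v
      rw [ENNReal.toReal_ofReal (Real.exp_pos _).le]
    exact integrable_congr (Filter.Eventually.of_forall fun v => this v)
  have hint_μ' : Integrable (fun v => Real.exp (s * v)) μ' := by
    rw [hwd]
    exact hmul_int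
  have hintegral_μ' : ∫ v, Real.exp (s * v) ∂μ' =
      Real.exp ((ψ₀ θ' - ψ₀ θ) / σ ^ 2) := by
    rw [hμ']
    have h1 : (fun v => ENNReal.ofReal (g v)) =
        fun v => ((Real.toNNReal (g v) : ℝ≥0) : ℝ≥0∞) := rfl
    rw [h1, integral_withDensity_eq_integral_smul hg_meas.real_toNNReal]
    have h2 : ∀ v, (Real.toNNReal (g v)) • Real.exp (s * v) =
        Real.exp (s * v) * g v := by
      intro v
      rw [NNReal.smul_def, smul_eq_mul, Real.coe_toNNReal _ (Real.exp_pos _).le, mul_comm]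
    rw [integral_congr_ae (Filter.Eventually.of_forall h2), hmul_integral]
  -- transfer along the map
  have hmap_int : Integrable (fun ω => Real.exp (s * Y ω)) P := by
    have := (integrable_map_measure
      (f := Y) (g := fun v => Real.exp (s * v))
      (Real.continuous_exp.comp (continuous_const.mul continuous_id)).aestronglyMeasurable
      hY.aemeasurable).mp (by rw [hlaw]; exact hint_μ')
    exact this
  have hmap_integral : ∫ ω, Real.exp (s * Y ω) ∂P =
      Real.exp ((ψ₀ θ' - ψ₀ θ) / σ ^ 2) := by
    have h3 : ∫ ω, Real.exp (s * Y ω) ∂P = ∫ v, Real.exp (s * v) ∂(Measure.map Y P) :=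
      (integral_map (f := fun v => Real.exp (s * v)) hY.aemeasurable
        (Real.continuous_exp.comp (continuous_const.mul continuous_id)).aestronglyMeasurable).symm
    rw [h3, hlaw]
    exact hintegral_μ'
  exact ⟨hmap_int, hmap_integral⟩


lemma aux_tail {Ω : Type} [MeasurableSpace Ω] (P : Measure Ω) [IsProbabilityMeasure P]
    {n : ℕ} (ψ₀ dψ₀ ddψ₀ : ℝ → ℝ)
    (hd1 : ∀ t, HasDerivAt ψ₀ (dψ₀ t) t) (hd2 : ∀ t, HasDerivAt dψ₀ (ddψ₀ t) t)
    {c₀ : ℝ} (hub : ∀ t, ddψ₀ t ≤ c₀)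
    {σ : ℝ} (hσ : 0 < σ) (cc : ℝ → ℝ) (hcc : Measurable cc)
    (ν : Measure ℝ) [SigmaFinite ν]
    (hnorm : ∀ θ : ℝ, ∫ v, Real.exp ((θ * v - ψ₀ θ) / σ ^ 2 + cc v / σ ^ 2) ∂ν = 1)
    (θv : Fin n → ℝ) (y : Ω → Fin n → ℝ) (hmeas : ∀ i, Measurable fun ω => y ω i)
    (hindep : iIndepFun (fun i ω => y ω i) P)
    (hlaw : ∀ i, Measure.map (fun ω => y ω i) P =
        ν.withDensity (fun v => ENNReal.ofReal (Real.exp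
          ((θv i * v - ψ₀ (θv i)) / σ ^ 2 + cc v / σ ^ 2))))
    (a : Fin n → ℝ) (t : ℝ) (ht : 0 ≤ t) (ε : ℝ) :
    (P {ω | ε ≤ (∑ i, a i * y ω i) - ∑ i, a i * dψ₀ (θv i)}).toReal ≤
      Real.exp (-t * ε + c₀ * σ ^ 2 * (∑ i, a i ^ 2) * t ^ 2 / 2) := by
  have hσ2 : (0:ℝ) < σ ^ 2 := by positivity
  set Xf : Fin n → Ω → ℝ := fun i ω => a i * y ω i with hXf
  have hXmeas : ∀ i, Measurable (Xf i) := fun i => (hmeas i).const_mul _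
  have hindep' : iIndepFun Xf P := by
    have := hindep.comp (fun i (v : ℝ) => a i * v) (fun i => measurable_id.const_mul _)
    exact this
  have hone : ∀ i, Integrable (fun ω => Real.exp ((t * a i) * y ω i)) P ∧
      ∫ ω, Real.exp ((t * a i) * y ω i) ∂P =
        Real.exp ((ψ₀ (θv i + (t * a i) * σ ^ 2) - ψ₀ (θv i)) / σ ^ 2) := fun i =>
    aux_mgf_one P ψ₀ hσ cc hcc ν hnorm (θv i) (t * a i) _ (hmeas i) (hlaw i)
  have h_int : ∀ i, Integrable (fun ω => Real.exp (t * Xf i ω)) P := by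
    intro i
    have := (hone i).1
    simpa [hXf, mul_assoc] using this
  have h_int_sum : Integrable (fun ω => Real.exp (t * (∑ i, Xf i) ω)) P :=
    hindep'.integrable_exp_mul_sum hXmeas (fun i _ => h_int i)
  set M : ℝ := ∑ i, a i * dψ₀ (θv i) with hM
  have hset : {ω | ε ≤ (∑ i, a i * y ω i) - M} = {ω | ε + M ≤ (∑ i, Xf i) ω} := by
    ext ω
    simp only [Set.mem_setOf_eq, Finset.sum_apply, hXf]
    constructor <;> intro h <;> linarith
  have hch := measure_ge_le_exp_mul_mgf (μ := P) (X := ∑ i, Xf i) (ε + M) ht h_int_sum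
  rw [← hset] at hch
  -- bound the mgf
  have hmgf_eq : mgf (∑ i, Xf i) P t = ∏ i, mgf (Xf i) P t :=
    hindep'.mgf_sum hXmeas Finset.univ
  have hmgf_i : ∀ i, mgf (Xf i) P t =
      Real.exp ((ψ₀ (θv i + (t * a i) * σ ^ 2) - ψ₀ (θv i)) / σ ^ 2) := by
    intro i
    rw [mgf]
    rw [← (hone i).2]
    congr 1 with ω
    rw [hXf]
    ring_nf
  have hbound_i : ∀ i, (ψ₀ (θv i + (t * a i) * σ ^ 2) - ψ₀ (θv i)) / σ ^ 2 ≤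
      t * (a i * dψ₀ (θv i)) + c₀ * σ ^ 2 * a i ^ 2 * t ^ 2 / 2 := by
    intro i
    have htay := aux_taylor hd1 hd2 hub (θv i) ((t * a i) * σ ^ 2)
    rw [div_le_iff₀ hσ2]
    nlinarith [htay]
  have hmgf_le : mgf (∑ i, Xf i) P t ≤
      Real.exp (t * M + c₀ * σ ^ 2 * (∑ i, a i ^ 2) * t ^ 2 / 2) := by
    rw [hmgf_eq]
    have : ∏ i, mgf (Xf i) P t =
        Real.exp (∑ i, (ψ₀ (θv i + (t * a i) * σ ^ 2) - ψ₀ (θv i)) / σ ^ 2) := by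
      rw [Real.exp_sum]
      exact Finset.prod_congr rfl fun i _ => hmgf_i i
    rw [this, Real.exp_le_exp]
    calc ∑ i, (ψ₀ (θv i + (t * a i) * σ ^ 2) - ψ₀ (θv i)) / σ ^ 2
        ≤ ∑ i, (t * (a i * dψ₀ (θv i)) + c₀ * σ ^ 2 * a i ^ 2 * t ^ 2 / 2) :=
          Finset.sum_le_sum fun i _ => hbound_i i
      _ = t * M + c₀ * σ ^ 2 * (∑ i, a i ^ 2) * t ^ 2 / 2 := by
          rw [Finset.sum_add_distrib, ← Finset.mul_sum, hM]
          congr 1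
          rw [Finset.mul_sum, Finset.sum_mul, Finset.sum_div]
  calc (P {ω | ε ≤ (∑ i, a i * y ω i) - M}).toReal
      ≤ Real.exp (-t * (ε + M)) * mgf (∑ i, Xf i) P t := hch
    _ ≤ Real.exp (-t * (ε + M)) *
        Real.exp (t * M + c₀ * σ ^ 2 * (∑ i, a i ^ 2) * t ^ 2 / 2) :=
        mul_le_mul_of_nonneg_left hmgf_le (Real.exp_pos _).le
    _ = Real.exp (-t * ε + c₀ * σ ^ 2 * (∑ i, a i ^ 2) * t ^ 2 / 2) := by
        rw [← Real.exp_add]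
        congr 1
        ring

lemma aux_tail_lower {Ω : Type} [MeasurableSpace Ω] (P : Measure Ω) [IsProbabilityMeasure P]
    {n : ℕ} (ψ₀ dψ₀ ddψ₀ : ℝ → ℝ)
    (hd1 : ∀ t, HasDerivAt ψ₀ (dψ₀ t) t) (hd2 : ∀ t, HasDerivAt dψ₀ (ddψ₀ t) t)
    {c₀ : ℝ} (hub : ∀ t, ddψ₀ t ≤ c₀)
    {σ : ℝ} (hσ : 0 < σ) (cc : ℝ → ℝ) (hcc : Measurable cc)
    (ν : Measure ℝ) [SigmaFinite ν]
    (hnorm : ∀ θ : ℝ, ∫ v, Real.exp ((θ * v - ψ₀ θ) / σ ^ 2 + cc v / σ ^ 2) ∂ν = 1)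
    (θv : Fin n → ℝ) (y : Ω → Fin n → ℝ) (hmeas : ∀ i, Measurable fun ω => y ω i)
    (hindep : iIndepFun (fun i ω => y ω i) P)
    (hlaw : ∀ i, Measure.map (fun ω => y ω i) P =
        ν.withDensity (fun v => ENNReal.ofReal (Real.exp
          ((θv i * v - ψ₀ (θv i)) / σ ^ 2 + cc v / σ ^ 2))))
    (a : Fin n → ℝ) (t : ℝ) (ht : 0 ≤ t) (ε : ℝ) :
    (P {ω | ε ≤ (∑ i, a i * dψ₀ (θv i)) - ∑ i, a i * y ω i}).toReal ≤
      Real.exp (-t * ε + c₀ * σ ^ 2 * (∑ i, a i ^ 2) * t ^ 2 / 2) := by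
  have h := aux_tail P ψ₀ dψ₀ ddψ₀ hd1 hd2 hub hσ cc hcc ν hnorm θv y hmeas hindep hlaw
    (fun i => -a i) t ht ε
  simp only [neg_mul, Finset.sum_neg_distrib, neg_sq, sub_neg_eq_add, neg_add_eq_sub] at h
  refine le_trans h (le_of_eq ?_)
  congr 1
  ring

lemma aux_opt {q e r : ℝ} (hq : 0 < q) (he : 0 < e)
    (h : ∀ t, 0 ≤ t → r ≤ Real.exp (-t * e + q * t ^ 2 / 2)) :
    r ≤ Real.exp (-e ^ 2 / (2 * q)) := by
  have h2 := h (e / q) (by positivity)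
  have h3 : -(e / q) * e + q * (e / q) ^ 2 / 2 = -e ^ 2 / (2 * q) := by
    field_simp
    ring
  rwa [h3] at h2

lemma aux_zero {Ω : Type} [MeasurableSpace Ω] (P : Measure Ω) [IsProbabilityMeasure P]
    (s : Set Ω) {e : ℝ} (he : 0 < e)
    (h : ∀ t, 0 ≤ t → (P s).toReal ≤ Real.exp (-t * e)) : P s = 0 := by
  have h0 : (P s).toReal ≤ 0 := by
    by_contra hcon
    push_neg at hcon
    set δ : ℝ := (P s).toReal with hδ
    have hδ1 : δ ≤ 1 := by
      have := prob_le_one (μ := P) (s := s)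
      have := ENNReal.toReal_mono ENNReal.one_ne_top this
      simpa using this
    have hlog : Real.log δ ≤ 0 := Real.log_nonpos hcon.le hδ1
    set t : ℝ := (1 - Real.log δ) / e with htdef
    have ht : 0 ≤ t := div_nonneg (by linarith) he.le
    have h2 := h t ht
    have h3 : -t * e = Real.log δ - 1 := by
      rw [htdef]
      field_simp
      ring
    rw [h3, Real.exp_sub, Real.exp_log hcon] at h2
    have hgt : (1:ℝ) < Real.exp 1 := by
      have := Real.exp_one_gt_d9
      linarith
    linarith [div_lt_self hcon hgt]
  have := ENNReal.toReal_nonneg (a := P s)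
  have heq : (P s).toReal = 0 := le_antisymm h0 this
  rcases (ENNReal.toReal_eq_zero_iff _).mp heq with h | h
  · exact h
  · exact absurd h (measure_ne_top P s)

set_option maxHeartbeats 3200000 in
theorem stmt_8 (n p : ℕ) (hn : 1 ≤ n) (hp : 1 ≤ p)
    (X : Fin n → Fin p → ℝ)
    (ψ₀ dψ₀ ddψ₀ : ℝ → ℝ)
    (hψ₀conv : ConvexOn ℝ Set.univ ψ₀)
    (hd1 : ∀ t, HasDerivAt ψ₀ (dψ₀ t) t)
    (hd2 : ∀ t, HasDerivAt dψ₀ (ddψ₀ t) t)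
    (βs : Fin p → ℝ)
    (c₀ : ℝ) (hc₀ : IsLUB (Set.range ddψ₀) c₀)
    -- the GLM probability model
    (σ : ℝ) (hσ : 0 < σ)
    (cc : ℝ → ℝ) (hcc : Measurable cc)
    (ν : Measure ℝ) [SigmaFinite ν]
    (hnorm : ∀ θ : ℝ,
        ∫ v, Real.exp ((θ * v - ψ₀ θ) / σ ^ 2 + cc v / σ ^ 2) ∂ν = 1)
    (Ω : Type) (mΩ : MeasurableSpace Ω) (P : Measure Ω) [IsProbabilityMeasure P]
    (y : Ω → Fin n → ℝ) (hmeas : ∀ i, Measurable fun ω => y ω i)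
    (hindep : iIndepFun (fun i ω => y ω i) P)
    (hlaw : ∀ i, Measure.map (fun ω => y ω i) P =
        ν.withDensity (fun v => ENNReal.ofReal (Real.exp
          (((∑ k, X i k * βs k) * v - ψ₀ (∑ k, X i k * βs k)) / σ ^ 2 + cc v / σ ^ 2))))
    (S : Finset (Fin p)) (hS : ∀ j, βs j ≠ 0 → j ∈ S)
    (w : Fin p → ℝ) (hw : ∀ j, 0 ≤ w j) (hwpos : ∀ j ∉ S, 0 < w j) :
    -- (i) the main bound under (lm-2-cond-2)
    (∀ lam0 lam1 ε₀ : ℝ, 0 < lam0 → 0 < lam1 → 0 < ε₀ →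
      (∑ j, Real.exp (-((n : ℝ) ^ 2 * (if j ∈ S then lam0 else w j * lam1) ^ 2) /
          (2 * σ ^ 2 * c₀ * ∑ i, X i j ^ 2)) ≤ ε₀ / 2) →
      ENNReal.ofReal (1 - ε₀) ≤
        P {ω | (∀ j ∈ S,
            |(n : ℝ)⁻¹ * ∑ i, X i j * y ω i -
              (n : ℝ)⁻¹ * ∑ i, X i j * dψ₀ (∑ k, X i k * βs k)| ≤ lam0) ∧
          ∀ j ∉ S,
            |(n : ℝ)⁻¹ * ∑ i, X i j * y ω i -
              (n : ℝ)⁻¹ * ∑ i, X i j * dψ₀ (∑ k, X i k * βs k)| / w j ≤ lam1}) ∧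
    -- (ii) the particular case
    (∀ lam ε₀ : ℝ, (∀ j, ∑ i, X i j ^ 2 = (n : ℝ)) → (∀ j ∉ S, w j = 1) →
      0 < ε₀ → ε₀ < 1 →
      σ * Real.sqrt ((2 * c₀ / (n : ℝ)) * Real.log (2 * (p : ℝ) / ε₀)) ≤ lam →
      ENNReal.ofReal (1 - ε₀) ≤
        P {ω | ∀ j,
          |(n : ℝ)⁻¹ * ∑ i, X i j * y ω i -
            (n : ℝ)⁻¹ * ∑ i, X i j * dψ₀ (∑ k, X i k * βs k)| ≤ lam}) := by
  classical
  have hn0 : (0:ℝ) < n := by exact_mod_cast hn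
  have hp0 : (0:ℝ) < p := by exact_mod_cast hp
  have hp1 : (1:ℝ) ≤ p := by exact_mod_cast hp
  have hσ2 : (0:ℝ) < σ ^ 2 := by positivity
  have hub : ∀ t, ddψ₀ t ≤ c₀ := fun t => hc₀.1 (Set.mem_range_self t)
  have hLmeas : ∀ j : Fin p, Measurable (fun ω => ∑ i, X i j * y ω i) := fun j =>
    Finset.measurable_sum _ fun i _ => (hmeas i).const_mul _
  have hfmeas : ∀ j : Fin p, Measurable (fun ω =>
      |(n:ℝ)⁻¹ * ∑ i, X i j * y ω i - (n:ℝ)⁻¹ * ∑ i, X i j * dψ₀ (∑ k, X i k * βs k)|) :=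
    fun j => (((hLmeas j).const_mul _).sub_const _).abs
  have hscale : ∀ u v c : ℝ, c < |(n:ℝ)⁻¹ * u - (n:ℝ)⁻¹ * v| → (n:ℝ) * c < |u - v| := by
    intro u v c hc
    have h1 : (n:ℝ)⁻¹ * u - (n:ℝ)⁻¹ * v = (u - v) / n := by field_simp
    rw [h1, abs_div, abs_of_pos hn0, lt_div_iff₀ hn0] at hc
    linarith
  have tailA : ∀ (j : Fin p) (t : ℝ), 0 ≤ t → ∀ ε : ℝ,
      (P {ω | ε ≤ (∑ i, X i j * y ω i) - ∑ i, X i j * dψ₀ (∑ k, X i k * βs k)}).toReal ≤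
        Real.exp (-t * ε + c₀ * σ ^ 2 * (∑ i, X i j ^ 2) * t ^ 2 / 2) :=
    fun j t ht ε => aux_tail P ψ₀ dψ₀ ddψ₀ hd1 hd2 hub hσ cc hcc ν hnorm
      (fun i => ∑ k, X i k * βs k) y hmeas hindep hlaw (fun i => X i j) t ht ε
  have tailB : ∀ (j : Fin p) (t : ℝ), 0 ≤ t → ∀ ε : ℝ,
      (P {ω | ε ≤ (∑ i, X i j * dψ₀ (∑ k, X i k * βs k)) - ∑ i, X i j * y ω i}).toReal ≤
        Real.exp (-t * ε + c₀ * σ ^ 2 * (∑ i, X i j ^ 2) * t ^ 2 / 2) :=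
    fun j t ht ε => aux_tail_lower P ψ₀ dψ₀ ddψ₀ hd1 hd2 hub hσ cc hcc ν hnorm
      (fun i => ∑ k, X i k * βs k) y hmeas hindep hlaw (fun i => X i j) t ht ε
  have hPA : ∀ (j : Fin p) (c : ℝ), 0 < c₀ * σ ^ 2 * (∑ i, X i j ^ 2) → 0 < c →
      P {ω | (n:ℝ) * c ≤ (∑ i, X i j * y ω i) - ∑ i, X i j * dψ₀ (∑ k, X i k * βs k)} ≤
        ENNReal.ofReal (Real.exp (-((n:ℝ) ^ 2 * c ^ 2) / (2 * σ ^ 2 * c₀ * ∑ i, X i j ^ 2))) := by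
    intro j c hq hc
    have hopt := aux_opt hq (mul_pos hn0 hc) (fun t ht => tailA j t ht ((n:ℝ) * c))
    have hexp_eq : -((n:ℝ) * c) ^ 2 / (2 * (c₀ * σ ^ 2 * ∑ i, X i j ^ 2)) =
        -((n:ℝ) ^ 2 * c ^ 2) / (2 * σ ^ 2 * c₀ * ∑ i, X i j ^ 2) := by
      rw [mul_pow]
      ring_nf
    rw [hexp_eq] at hopt
    rw [← ENNReal.ofReal_toReal (measure_ne_top P _)]
    exact ENNReal.ofReal_le_ofReal hopt
  have hPB : ∀ (j : Fin p) (c : ℝ), 0 < c₀ * σ ^ 2 * (∑ i, X i j ^ 2) → 0 < c →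
      P {ω | (n:ℝ) * c ≤ (∑ i, X i j * dψ₀ (∑ k, X i k * βs k)) - ∑ i, X i j * y ω i} ≤
        ENNReal.ofReal (Real.exp (-((n:ℝ) ^ 2 * c ^ 2) / (2 * σ ^ 2 * c₀ * ∑ i, X i j ^ 2))) := by
    intro j c hq hc
    have hopt := aux_opt hq (mul_pos hn0 hc) (fun t ht => tailB j t ht ((n:ℝ) * c))
    have hexp_eq : -((n:ℝ) * c) ^ 2 / (2 * (c₀ * σ ^ 2 * ∑ i, X i j ^ 2)) =
        -((n:ℝ) ^ 2 * c ^ 2) / (2 * σ ^ 2 * c₀ * ∑ i, X i j ^ 2) := by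
      rw [mul_pow]
      ring_nf
    rw [hexp_eq] at hopt
    rw [← ENNReal.ofReal_toReal (measure_ne_top P _)]
    exact ENNReal.ofReal_le_ofReal hopt
  have main : ∀ lam0 lam1 ε₀ : ℝ, 0 < lam0 → 0 < lam1 → 0 < ε₀ →
      (∑ j, Real.exp (-((n : ℝ) ^ 2 * (if j ∈ S then lam0 else w j * lam1) ^ 2) /
          (2 * σ ^ 2 * c₀ * ∑ i, X i j ^ 2)) ≤ ε₀ / 2) →
      ENNReal.ofReal (1 - ε₀) ≤
        P {ω | (∀ j ∈ S,
            |(n : ℝ)⁻¹ * ∑ i, X i j * y ω i -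
              (n : ℝ)⁻¹ * ∑ i, X i j * dψ₀ (∑ k, X i k * βs k)| ≤ lam0) ∧
          ∀ j ∉ S,
            |(n : ℝ)⁻¹ * ∑ i, X i j * y ω i -
              (n : ℝ)⁻¹ * ∑ i, X i j * dψ₀ (∑ k, X i k * βs k)| / w j ≤ lam1} := by
    intro lam0 lam1 ε₀ hl0 hl1 hε0 hsum
    rcases le_or_gt 1 ε₀ with h1 | h1
    · rw [ENNReal.ofReal_eq_zero.mpr (by linarith)]
      exact zero_le
    have htjpos : ∀ j : Fin p, 0 < (if j ∈ S then lam0 else w j * lam1) := by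
      intro j
      by_cases hj : j ∈ S
      · simpa [hj] using hl0
      · simp only [hj, if_false]
        exact mul_pos (hwpos j hj) hl1
    have hqpos : ∀ j : Fin p, 0 < c₀ * σ ^ 2 * (∑ i, X i j ^ 2) := by
      intro j
      have hej : Real.exp (-((n : ℝ) ^ 2 * (if j ∈ S then lam0 else w j * lam1) ^ 2) /
          (2 * σ ^ 2 * c₀ * ∑ i, X i j ^ 2)) ≤ ε₀ / 2 :=
        le_trans (Finset.single_le_sum
          (f := fun j => Real.exp (-((n : ℝ) ^ 2 * (if j ∈ S then lam0 else w j * lam1) ^ 2) /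
            (2 * σ ^ 2 * c₀ * ∑ i, X i j ^ 2)))
          (fun i _ => (Real.exp_pos _).le) (Finset.mem_univ j)) hsum
      have hlt1 : -((n : ℝ) ^ 2 * (if j ∈ S then lam0 else w j * lam1) ^ 2) /
          (2 * σ ^ 2 * c₀ * ∑ i, X i j ^ 2) < 0 := by
        rw [← Real.exp_lt_one_iff]
        linarith
      have hnum : 0 < (n:ℝ) ^ 2 * (if j ∈ S then lam0 else w j * lam1) ^ 2 :=
        mul_pos (pow_pos hn0 2) (pow_pos (htjpos j) 2)
      rcases lt_trichotomy (2 * σ ^ 2 * c₀ * ∑ i, X i j ^ 2) 0 with hd | hd | hd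
      · exfalso
        have : 0 < -((n:ℝ) ^ 2 * (if j ∈ S then lam0 else w j * lam1) ^ 2) /
            (2 * σ ^ 2 * c₀ * ∑ i, X i j ^ 2) := div_pos_of_neg_of_neg (by linarith) hd
        linarith
      · rw [hd, div_zero] at hlt1
        linarith
      · nlinarith [hσ2]
    have hgoodm : MeasurableSet {ω : Ω | (∀ j ∈ S,
            |(n : ℝ)⁻¹ * ∑ i, X i j * y ω i -
              (n : ℝ)⁻¹ * ∑ i, X i j * dψ₀ (∑ k, X i k * βs k)| ≤ lam0) ∧
          ∀ j ∉ S,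
            |(n : ℝ)⁻¹ * ∑ i, X i j * y ω i -
              (n : ℝ)⁻¹ * ∑ i, X i j * dψ₀ (∑ k, X i k * βs k)| / w j ≤ lam1} := by
      rw [Set.setOf_and]
      apply MeasurableSet.inter
      · rw [Set.setOf_forall]
        refine MeasurableSet.iInter fun j => ?_
        by_cases hj : j ∈ S
        · simp only [hj, true_implies]
          exact measurableSet_le (hfmeas j) measurable_const
        · simp [hj]
      · rw [Set.setOf_forall]
        refine MeasurableSet.iInter fun j => ?_
        by_cases hj : j ∈ S
        · simp [hj]
        · simp only [hj, not_false_iff, true_implies]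
          exact measurableSet_le ((hfmeas j).div_const _) measurable_const
    have hsub : {ω : Ω | (∀ j ∈ S,
            |(n : ℝ)⁻¹ * ∑ i, X i j * y ω i -
              (n : ℝ)⁻¹ * ∑ i, X i j * dψ₀ (∑ k, X i k * βs k)| ≤ lam0) ∧
          ∀ j ∉ S,
            |(n : ℝ)⁻¹ * ∑ i, X i j * y ω i -
              (n : ℝ)⁻¹ * ∑ i, X i j * dψ₀ (∑ k, X i k * βs k)| / w j ≤ lam1}ᶜ ⊆
        ⋃ j : Fin p,
          ({ω : Ω | (n:ℝ) * (if j ∈ S then lam0 else w j * lam1) ≤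
              (∑ i, X i j * y ω i) - ∑ i, X i j * dψ₀ (∑ k, X i k * βs k)} ∪
           {ω : Ω | (n:ℝ) * (if j ∈ S then lam0 else w j * lam1) ≤
              (∑ i, X i j * dψ₀ (∑ k, X i k * βs k)) - ∑ i, X i j * y ω i}) := by
      intro ω hω
      simp only [Set.mem_compl_iff, Set.mem_setOf_eq, not_and_or] at hω
      have key : ∃ j : Fin p, (n:ℝ) * (if j ∈ S then lam0 else w j * lam1) <
          |(∑ i, X i j * y ω i) - ∑ i, X i j * dψ₀ (∑ k, X i k * βs k)| := by
        rcases hω with hω | hω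
        · push_neg at hω
          obtain ⟨j, hjS, hj⟩ := hω
          exact ⟨j, by rw [if_pos hjS]; exact hscale _ _ _ hj⟩
        · push_neg at hω
          obtain ⟨j, hjS, hj⟩ := hω
          refine ⟨j, ?_⟩
          rw [if_neg hjS]
          have hwj := hwpos j hjS
          rw [lt_div_iff₀ hwj] at hj
          exact hscale _ _ _ (by linarith)
      obtain ⟨j, hj⟩ := key
      refine Set.mem_iUnion.mpr ⟨j, ?_⟩
      rcases lt_abs.mp hj with h3 | h3
      · exact Or.inl (le_of_lt h3)
      · rw [neg_sub] at h3
        exact Or.inr (le_of_lt h3)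
    have hPc : P {ω : Ω | (∀ j ∈ S,
            |(n : ℝ)⁻¹ * ∑ i, X i j * y ω i -
              (n : ℝ)⁻¹ * ∑ i, X i j * dψ₀ (∑ k, X i k * βs k)| ≤ lam0) ∧
          ∀ j ∉ S,
            |(n : ℝ)⁻¹ * ∑ i, X i j * y ω i -
              (n : ℝ)⁻¹ * ∑ i, X i j * dψ₀ (∑ k, X i k * βs k)| / w j ≤ lam1}ᶜ ≤
        ENNReal.ofReal ε₀ := by
      refine le_trans (measure_mono hsub) ?_
      refine le_trans (measure_iUnion_fintype_le P _) ?_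
      have hstep : ∀ j : Fin p,
          P ({ω : Ω | (n:ℝ) * (if j ∈ S then lam0 else w j * lam1) ≤
              (∑ i, X i j * y ω i) - ∑ i, X i j * dψ₀ (∑ k, X i k * βs k)} ∪
             {ω : Ω | (n:ℝ) * (if j ∈ S then lam0 else w j * lam1) ≤
              (∑ i, X i j * dψ₀ (∑ k, X i k * βs k)) - ∑ i, X i j * y ω i}) ≤
          ENNReal.ofReal (2 * Real.exp (-((n : ℝ) ^ 2 *
            (if j ∈ S then lam0 else w j * lam1) ^ 2) /
            (2 * σ ^ 2 * c₀ * ∑ i, X i j ^ 2))) := by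
        intro j
        refine le_trans (measure_union_le _ _) ?_
        refine le_trans (add_le_add (hPA j _ (hqpos j) (htjpos j))
          (hPB j _ (hqpos j) (htjpos j))) ?_
        rw [← ENNReal.ofReal_add (Real.exp_pos _).le (Real.exp_pos _).le]
        refine le_of_eq ?_
        congr 1
        ring
      refine le_trans (Finset.sum_le_sum fun j _ => hstep j) ?_
      rw [← ENNReal.ofReal_sum_of_nonneg (fun j _ => by positivity)]
      apply ENNReal.ofReal_le_ofReal
      rw [← Finset.mul_sum]
      linarith
    calc ENNReal.ofReal (1 - ε₀) = 1 - ENNReal.ofReal ε₀ := by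
          rw [ENNReal.ofReal_sub 1 hε0.le, ENNReal.ofReal_one]
      _ ≤ 1 - P _ᶜ := tsub_le_tsub_left hPc 1
      _ = P _ := by
          have h2 := prob_compl_eq_one_sub (μ := P) hgoodm.compl
          rw [compl_compl] at h2
          exact h2.symm
  refine ⟨main, ?_⟩
  intro lam ε₀ hQn hw1 hε0 hε1 hlam
  have hlamnn : 0 ≤ lam := le_trans (mul_nonneg hσ.le (Real.sqrt_nonneg _)) hlam
  have hevm : MeasurableSet {ω : Ω | ∀ j,
      |(n : ℝ)⁻¹ * ∑ i, X i j * y ω i -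
        (n : ℝ)⁻¹ * ∑ i, X i j * dψ₀ (∑ k, X i k * βs k)| ≤ lam} := by
    rw [Set.setOf_forall]
    exact MeasurableSet.iInter fun j => measurableSet_le (hfmeas j) measurable_const
  rcases le_or_gt c₀ 0 with hc | hc
  · -- degenerate case: the statistic is a.s. constant
    have hzero : ∀ (j : Fin p) (ε : ℝ), 0 < ε →
        P {ω | ε ≤ (∑ i, X i j * y ω i) - ∑ i, X i j * dψ₀ (∑ k, X i k * βs k)} = 0 ∧
        P {ω | ε ≤ (∑ i, X i j * dψ₀ (∑ k, X i k * βs k)) - ∑ i, X i j * y ω i} = 0 := by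
      intro j ε hε
      have hQ0 : (0:ℝ) ≤ ∑ i, X i j ^ 2 := Finset.sum_nonneg fun i _ => sq_nonneg _
      have hbd : ∀ t : ℝ, c₀ * σ ^ 2 * (∑ i, X i j ^ 2) * t ^ 2 / 2 ≤ 0 := by
        intro t
        have h1 : c₀ * (σ ^ 2 * ((∑ i, X i j ^ 2) * t ^ 2)) ≤ 0 :=
          mul_nonpos_iff.mpr (Or.inr ⟨hc, by positivity⟩)
        nlinarith [h1]
      constructor
      · refine aux_zero P _ hε fun t ht => ?_
        refine le_trans (tailA j t ht ε) ?_
        apply Real.exp_le_exp.mpr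
        linarith [hbd t]
      · refine aux_zero P _ hε fun t ht => ?_
        refine le_trans (tailB j t ht ε) ?_
        apply Real.exp_le_exp.mpr
        linarith [hbd t]
    have hsub2 : {ω : Ω | ∀ j,
        |(n : ℝ)⁻¹ * ∑ i, X i j * y ω i -
          (n : ℝ)⁻¹ * ∑ i, X i j * dψ₀ (∑ k, X i k * βs k)| ≤ lam}ᶜ ⊆
      ⋃ j : Fin p, ⋃ k : ℕ,
        ({ω : Ω | (n:ℝ) * lam + 1 / ((k:ℝ) + 1) ≤
            (∑ i, X i j * y ω i) - ∑ i, X i j * dψ₀ (∑ k, X i k * βs k)} ∪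
         {ω : Ω | (n:ℝ) * lam + 1 / ((k:ℝ) + 1) ≤
            (∑ i, X i j * dψ₀ (∑ k, X i k * βs k)) - ∑ i, X i j * y ω i}) := by
      intro ω hω
      simp only [Set.mem_compl_iff, Set.mem_setOf_eq] at hω
      push_neg at hω
      obtain ⟨j, hj⟩ := hω
      have h2 := hscale _ _ _ hj
      obtain ⟨k, hk⟩ := exists_nat_one_div_lt
        (show (0:ℝ) < |(∑ i, X i j * y ω i) - ∑ i, X i j * dψ₀ (∑ k, X i k * βs k)| -
          (n:ℝ) * lam by linarith)
      refine Set.mem_iUnion.mpr ⟨j, Set.mem_iUnion.mpr ⟨k, ?_⟩⟩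
      have h3 : (n:ℝ) * lam + 1 / ((k:ℝ) + 1) ≤
          |(∑ i, X i j * y ω i) - ∑ i, X i j * dψ₀ (∑ k, X i k * βs k)| := by linarith
      rcases le_abs.mp h3 with h4 | h4
      · exact Or.inl h4
      · refine Or.inr ?_
        rw [neg_sub] at h4
        exact h4
    have hcompl0 : P {ω : Ω | ∀ j,
        |(n : ℝ)⁻¹ * ∑ i, X i j * y ω i -
          (n : ℝ)⁻¹ * ∑ i, X i j * dψ₀ (∑ k, X i k * βs k)| ≤ lam}ᶜ = 0 := by
      refine measure_mono_null hsub2 ?_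
      refine measure_iUnion_null fun j => measure_iUnion_null fun k => ?_
      have hεk : (0:ℝ) < (n:ℝ) * lam + 1 / ((k:ℝ) + 1) := by positivity
      exact measure_union_null (hzero j _ hεk).1 (hzero j _ hεk).2
    have hone : P {ω : Ω | ∀ j,
        |(n : ℝ)⁻¹ * ∑ i, X i j * y ω i -
          (n : ℝ)⁻¹ * ∑ i, X i j * dψ₀ (∑ k, X i k * βs k)| ≤ lam} = 1 := by
      have h1 := prob_compl_eq_one_sub (μ := P) hevm
      rw [hcompl0] at h1
      exact le_antisymm prob_le_one (tsub_eq_zero_iff_le.mp h1.symm)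
    rw [hone]
    exact ENNReal.ofReal_le_one.mpr (by linarith)
  · -- c₀ > 0 : apply the main bound
    have hlog : 0 < Real.log (2 * (p:ℝ) / ε₀) :=
      Real.log_pos ((one_lt_div hε0).mpr (by linarith))
    have hA : 0 < (2 * c₀ / (n:ℝ)) * Real.log (2 * (p:ℝ) / ε₀) :=
      mul_pos (div_pos (by linarith) hn0) hlog
    have hlampos : 0 < lam := lt_of_lt_of_le (mul_pos hσ (Real.sqrt_pos.mpr hA)) hlam
    have hlam2 : σ ^ 2 * ((2 * c₀ / (n:ℝ)) * Real.log (2 * (p:ℝ) / ε₀)) ≤ lam ^ 2 := by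
      have h1 : (σ * Real.sqrt ((2 * c₀ / (n:ℝ)) * Real.log (2 * (p:ℝ) / ε₀))) ^ 2 ≤ lam ^ 2 :=
        pow_le_pow_left₀ (mul_nonneg hσ.le (Real.sqrt_nonneg _)) hlam 2
      rwa [mul_pow, Real.sq_sqrt hA.le] at h1
    have hlogeq : Real.log (2 * (p:ℝ) / ε₀) = Real.log (2 * (p:ℝ)) - Real.log ε₀ :=
      Real.log_div (by positivity) (ne_of_gt hε0)
    have hsum : ∑ j, Real.exp (-((n : ℝ) ^ 2 * (if j ∈ S then lam else w j * lam) ^ 2) /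
        (2 * σ ^ 2 * c₀ * ∑ i, X i j ^ 2)) ≤ ε₀ / 2 := by
      have hterm : ∀ j : Fin p, Real.exp (-((n : ℝ) ^ 2 *
          (if j ∈ S then lam else w j * lam) ^ 2) /
          (2 * σ ^ 2 * c₀ * ∑ i, X i j ^ 2)) ≤ ε₀ / (2 * (p:ℝ)) := by
        intro j
        have hif : (if j ∈ S then lam else w j * lam) = lam := by
          by_cases hj : j ∈ S
          · rw [if_pos hj]
          · rw [if_neg hj, hw1 j hj, one_mul]
        rw [hif, hQn j]
        rw [← Real.exp_log (show (0:ℝ) < ε₀ / (2 * (p:ℝ)) by positivity), Real.exp_le_exp]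
        rw [Real.log_div (ne_of_gt hε0) (by positivity)]
        have hd : 0 < 2 * σ ^ 2 * c₀ * (n:ℝ) := by
          have : 0 < 2 * σ ^ 2 * c₀ := by nlinarith
          exact mul_pos this hn0
        rw [div_le_iff₀ hd]
        have hkey : 2 * σ ^ 2 * c₀ * (Real.log (2 * (p:ℝ)) - Real.log ε₀) ≤ (n:ℝ) * lam ^ 2 := by
          have h2 := mul_le_mul_of_nonneg_left hlam2 hn0.le
          have h3 : (n:ℝ) * (σ ^ 2 * ((2 * c₀ / (n:ℝ)) * Real.log (2 * (p:ℝ) / ε₀))) =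
              2 * σ ^ 2 * c₀ * (Real.log (2 * (p:ℝ)) - Real.log ε₀) := by
            rw [hlogeq]
            field_simp
          rw [h3] at h2
          exact h2
        nlinarith [mul_le_mul_of_nonneg_left hkey hn0.le]
      refine le_trans (Finset.sum_le_sum fun j _ => hterm j) ?_
      rw [Finset.sum_const, Finset.card_univ, Fintype.card_fin, nsmul_eq_mul]
      have : (p:ℝ) * (ε₀ / (2 * (p:ℝ))) = ε₀ / 2 := by
        field_simp
      rw [this]
    have hres := main lam lam ε₀ hlampos hlampos hε0 hsum
    refine le_trans hres (measure_mono ?_)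
    intro ω hω
    simp only [Set.mem_setOf_eq] at hω ⊢
    obtain ⟨h1, h2⟩ := hω
    intro j
    by_cases hj : j ∈ S
    · exact h1 j hj
    · have h3 := h2 j hj
      rwa [hw1 j hj, div_one] at h3
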